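/- Let $G$ be a finite group acting by ring automorphisms on a commutative ring $B$, let $C = B^G$ be the ring of invariants, and let $L$ be a field with ring homomorphisms $m_1, m_2 : B \to L$. Suppose that for every $g \in G$ the homomorphisms $m_1 \circ g$ and $m_2$ differ, i.e. there exists $b_g \in B$ with $m_1(g \cdot b_g) \neq m_2(b_g)$. If moreover for each $g$ the element $m_2(b_g) - m_1(g \cdot b_g)$ is invertible in $L$ (automatic since $L$ is a field and the difference is nonzero), then $m_1|_C \neq m_2|_C$. -/

import Mathlib

/-- If a finite group `G` acts on a commutative ring `B` by ring
automorphisms, and `m₁, m₂ : B → L` are ring homomorphisms to a field such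
that `m₁ ∘ g ≠ m₂` for every `g ∈ G`, then `m₁` and `m₂` differ on the ring
of invariants `B^G`. -/
theorem hom_differ_on_invariants {G B L : Type*} [Group G] [Finite G]
    [CommRing B] [MulSemiringAction G B] [Field L] (m₁ m₂ : B →+* L)
    (h : ∀ g : G, ∃ b : B, m₁ (g • b) ≠ m₂ b) :
    ∃ c : B, (∀ g : G, g • c = c) ∧ m₁ c ≠ m₂ c := by
  classical
  cases nonempty_fintype G
  by_contra hcon
  push_neg at hcon
  -- hcon : ∀ c, (∀ g, g • c = c) → m₁ c = m₂ c
  choose b hb using h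
  set a : G → L := fun g => m₁ (g • b g) with ha
  set u : G → L := fun g => (m₂ (b g) - a g)⁻¹ with hu
  have key : ∀ g : G, (m₂ (b g) - a g) * u g = 1 := by
    intro g
    exact mul_inv_cancel₀ (sub_ne_zero_of_ne (Ne.symm (hb g)))
  set v : G ⊕ G → L := Sum.elim a u with hv
  set f : MvPolynomial (G ⊕ G) B :=
    1 - ∏ g : G, (MvPolynomial.C (b g) - MvPolynomial.X (Sum.inl g)) *
      MvPolynomial.X (Sum.inr g) with hf
  set ρ : G → (MvPolynomial (G ⊕ G) B →+* MvPolynomial (G ⊕ G) B) :=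
    fun g => MvPolynomial.map (MulSemiringAction.toRingHom G B g) with hρ
  set F : MvPolynomial (G ⊕ G) B := ∏ g : G, ρ g f with hF
  -- evaluation of ρ g f under any ring hom φ
  have heval : ∀ (φ : B →+* L) (g : G),
      MvPolynomial.eval₂ φ v (ρ g f) = 1 - ∏ h : G, (φ (g • b h) - a h) * u h := by
    intro φ g
    rw [hρ, MvPolynomial.eval₂_map, hf]
    simp [MvPolynomial.eval₂_sub, MvPolynomial.eval₂_one, MvPolynomial.eval₂_prod,
      MvPolynomial.eval₂_mul, MvPolynomial.eval₂_sub, hv, MulSemiringAction.toRingHom]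
    rfl
  -- m₁ evaluates each factor to 1
  have hM1 : MvPolynomial.eval₂ m₁ v F = 1 := by
    rw [hF, MvPolynomial.eval₂_prod]
    refine Finset.prod_eq_one fun g _ => ?_
    rw [heval m₁ g]
    have : ∏ h : G, (m₁ (g • b h) - a h) * u h = 0 := by
      refine Finset.prod_eq_zero (Finset.mem_univ g) ?_
      rw [ha]
      simp
    rw [this, sub_zero]
  -- m₂ evaluates the factor at g = 1 to 0
  have hM2 : MvPolynomial.eval₂ m₂ v F = 0 := by
    rw [hF, MvPolynomial.eval₂_prod]
    refine Finset.prod_eq_zero (Finset.mem_univ (1 : G)) ?_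
    rw [heval m₂ 1]
    have : ∏ h : G, (m₂ ((1 : G) • b h) - a h) * u h = 1 := by
      refine Finset.prod_eq_one fun h _ => ?_
      rw [one_smul]
      exact key h
    rw [this, sub_self]
  -- coefficients of F are invariant
  have hcoeff : ∀ (d : (G ⊕ G) →₀ ℕ) (g : G), g • F.coeff d = F.coeff d := by
    intro d g
    have h1 : ρ g F = F := by
      rw [hF, map_prod]
      have h2 : ∀ g' : G, ρ g (ρ g' f) = ρ (g * g') f := by
        intro g'
        have hcomp : (MulSemiringAction.toRingHom G B g).comp
            (MulSemiringAction.toRingHom G B g') = MulSemiringAction.toRingHom G B (g * g') := by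
          ext x
          show g • g' • x = (g * g') • x
          rw [mul_smul]
        rw [hρ]
        simp only [MvPolynomial.map_map, hcomp]
      calc ∏ g' : G, ρ g (ρ g' f) = ∏ g' : G, ρ (g * g') f := by
            exact Finset.prod_congr rfl fun g' _ => h2 g'
        _ = ∏ g' : G, ρ g' f := Equiv.prod_comp (Equiv.mulLeft g) fun x => ρ x f
    have h3 : (ρ g F).coeff d = g • F.coeff d := by
      rw [hρ]
      exact MvPolynomial.coeff_map _ _ _
    rw [← h3, h1]
  -- hence eval₂ m₁ F = eval₂ m₂ F
  have hEq : MvPolynomial.eval₂ m₁ v F = MvPolynomial.eval₂ m₂ v F := by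
    rw [MvPolynomial.eval₂_eq, MvPolynomial.eval₂_eq]
    refine Finset.sum_congr rfl fun d _ => ?_
    rw [hcon (F.coeff d) (hcoeff d)]
  rw [hM1, hM2] at hEq
  exact one_ne_zero hEq
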